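/- Let P : ℕ → ℕ be a sequence of primes such that the set S(P) of primes not occurring infinitely often in P is infinite. Then for every positive integer k, the set of periodic points of the coordinatewise k-th power map h_P^k is dense in the solenoid Σ_P. -/

import Mathlib

set_option maxHeartbeats 1000000
open Complex Finset


/-- The `P`-adic solenoid: sequences on the unit circle with `z n = z (n+1) ^ P n`. -/
def Solenoid (P : ℕ → ℕ) : Set (ℕ → ℂ) :=
  {z | (∀ n, ‖z n‖ = 1) ∧ ∀ n, z n = z (n + 1) ^ P n}

/-- The coordinatewise `k`-th power map. -/
def hpow (k : ℕ) (z : ℕ → ℂ) : ℕ → ℂ := fun n => z n ^ k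

lemma pow_lip (a b : ℂ) (ha : ‖a‖ = 1) (hb : ‖b‖ = 1) (t : ℕ) :
    ‖a ^ t - b ^ t‖ ≤ t * ‖a - b‖ := by
  induction t with
  | zero => simp
  | succ t ih =>
    have : a ^ (t+1) - b ^ (t+1) = a * (a ^ t - b ^ t) + (a - b) * b ^ t := by ring
    rw [this]
    calc ‖a * (a ^ t - b ^ t) + (a - b) * b ^ t‖
        ≤ ‖a * (a ^ t - b ^ t)‖ + ‖(a - b) * b ^ t‖ :=
          norm_add_le _ _
      _ = ‖a ^ t - b ^ t‖ + ‖a - b‖ := by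
          rw [norm_mul, norm_mul, ha, norm_pow, hb, one_pow, one_mul, mul_one]
      _ ≤ t * ‖a - b‖ + ‖a - b‖ := by linarith
      _ = (t + 1 : ℕ) * ‖a - b‖ := by push_cast; ring

lemma hpow_iter (k m : ℕ) (z : ℕ → ℂ) (n : ℕ) : (hpow k)^[m] z n = z n ^ (k ^ m) := by
  induction m generalizing z with
  | zero => simp
  | succ m ih =>
    rw [Function.iterate_succ_apply, ih, hpow, pow_succ']
    simp [pow_mul]

lemma solenoid_telescope {P : ℕ → ℕ} {z : ℕ → ℂ} (hz : ∀ n, z n = z (n + 1) ^ P n)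
    (n : ℕ) : ∀ m, n ≤ m → z n = z m ^ ∏ j ∈ Finset.Ico n m, P j := by
  intro m
  induction m with
  | zero => intro h; interval_cases n; simp
  | succ m ih =>
    intro h
    rcases Nat.lt_or_ge n (m+1) with h' | h'
    · have hnm : n ≤ m := Nat.lt_succ_iff.mp h'
      rw [ih hnm, Finset.prod_Ico_succ_top hnm, mul_comm, pow_mul, ← hz m]
    · have : n = m + 1 := le_antisymm h h'
      subst this; simp

lemma pow_congr_mod {x : ℂ} {r : ℕ} (hx : x ^ r = 1) {a b : ℕ} (h : a ≡ b [MOD r]) :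
    x ^ a = x ^ b := by
  rw [pow_eq_pow_mod a hx, pow_eq_pow_mod b hx, h]

lemma exp_close (θ φ : ℝ) (h : |θ - φ| ≤ 1) :
    ‖Complex.exp (θ * Complex.I) - Complex.exp (φ * Complex.I)‖ ≤ 2 * |θ - φ| := by
  have : Complex.exp (θ * Complex.I) - Complex.exp (φ * Complex.I)
      = Complex.exp (φ * Complex.I) * (Complex.exp ((θ - φ : ℝ) * Complex.I) - 1) := by
    rw [mul_sub, mul_one, ← Complex.exp_add]
    push_cast
    ring_nf
  rw [this, norm_mul, Complex.norm_exp_ofReal_mul_I, one_mul]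
  have h2 : ‖((θ - φ : ℝ) : ℂ) * Complex.I‖ = |θ - φ| := by
    rw [norm_mul, Complex.norm_I, mul_one, Complex.norm_real, Real.norm_eq_abs]
  calc ‖Complex.exp ((θ - φ : ℝ) * Complex.I) - 1‖
      ≤ 2 * ‖((θ - φ : ℝ) : ℂ) * Complex.I‖ :=
        Complex.norm_exp_sub_one_le (by rw [h2]; exact h)
    _ = 2 * |θ - φ| := by rw [h2]

lemma approx (P : ℕ → ℕ) (hP : ∀ n, (P n).Prime) (k : ℕ) (hk : 0 < k)
    (q : ℕ) (hq : q.Prime) (hqk : k < q) (M : ℕ) (hM : ∀ n, M ≤ n → P n ≠ q)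
    (z : ℕ → ℂ) (hz : z ∈ Solenoid P) (N : ℕ) (ε : ℝ) (hε : 0 < ε) :
    ∃ w ∈ Solenoid P, (∃ m : ℕ, 1 ≤ m ∧ ∀ n, w n ^ k ^ m = w n) ∧
      ∀ n ≤ N, ‖w n - z n‖ < ε := by
  obtain ⟨hzabs, hzrel⟩ := hz
  set N' := max N M with hN'def
  set C : ℕ := ∏ j ∈ Finset.Ico 0 N', P j with hCdef
  have hC1 : 1 ≤ C := Finset.one_le_prod' fun i _ => (hP i).one_lt.le
  have hCpos : (0:ℝ) < C := by exact_mod_cast hC1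
  have hπ : (0:ℝ) < Real.pi := Real.pi_pos
  have hq1 : (1:ℝ) < q := by exact_mod_cast hq.one_lt
  obtain ⟨e, he⟩ := pow_unbounded_of_one_lt (R := ℝ)
    (max 7 (4 * Real.pi * C / ε)) hq1
  set r := q ^ e with hrdef
  have hrcast : ((q:ℝ)) ^ e = (r:ℝ) := by push_cast [hrdef]; ring
  rw [hrcast] at he
  have hr7 : (7:ℝ) < r := lt_of_le_of_lt (le_max_left _ _) he
  have hrε : 4 * Real.pi * C / ε < r := lt_of_le_of_lt (le_max_right _ _) he
  have hrpos : 0 < r := pow_pos hq.pos e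
  have hrR : (0:ℝ) < r := by exact_mod_cast hrpos
  haveI : NeZero r := ⟨hrpos.ne'⟩
  set ζ : ℂ := Complex.exp ((2 * Real.pi / r : ℝ) * Complex.I) with hζdef
  have hζ0 : ζ ≠ 0 := Complex.exp_ne_zero _
  have hζ1 : ‖ζ‖ = 1 := Complex.norm_exp_ofReal_mul_I _
  have hζr : ζ ^ r = 1 := by
    rw [hζdef, ← Complex.exp_nat_mul]
    have : (r:ℂ) * (((2 * Real.pi / r : ℝ)) * Complex.I) = 2 * (Real.pi : ℂ) * Complex.I := by
      have hrC : (r:ℂ) ≠ 0 := by exact_mod_cast hrpos.ne'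
      push_cast
      field_simp
    rw [this, Complex.exp_two_pi_mul_I]
  set θ : ℝ := (z N').arg with hθdef
  set a : ℤ := ⌊θ * r / (2 * Real.pi)⌋ with hadef
  set v : ℕ → ZMod r := fun n =>
    (a : ZMod r) * (∏ j ∈ Finset.Ico n N', (P j : ZMod r)) *
      ∏ j ∈ Finset.Ico N' n, ((P j : ZMod r))⁻¹ with hvdef
  have hvrec : ∀ n, v (n + 1) * (P n : ZMod r) = v n := by
    intro n
    rcases Nat.lt_or_ge n N' with h | h
    · have h1 : Finset.Ico N' n = ∅ := Finset.Ico_eq_empty (by omega)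
      have h2 : Finset.Ico N' (n+1) = ∅ := Finset.Ico_eq_empty (by omega)
      simp only [hvdef, h1, h2, Finset.prod_empty, mul_one]
      rw [Finset.prod_eq_prod_Ico_succ_bot h (fun j => (P j : ZMod r))]
      ring
    · have h1 : Finset.Ico n N' = ∅ := Finset.Ico_eq_empty (by omega)
      have h2 : Finset.Ico (n+1) N' = ∅ := Finset.Ico_eq_empty (by omega)
      have hu : IsUnit ((P n : ZMod r)) := by
        rw [ZMod.isUnit_iff_coprime]
        exact Nat.Coprime.pow_right e
          ((Nat.coprime_primes (hP n) hq).mpr (hM n (le_trans (le_max_right N M) h)))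
      simp only [hvdef, h1, h2, Finset.prod_empty, mul_one]
      rw [Finset.prod_Ico_succ_top h (fun j => ((P j : ZMod r))⁻¹)]
      rw [mul_assoc, mul_assoc, ZMod.inv_mul_of_unit _ hu, mul_one]
  set w : ℕ → ℂ := fun n => ζ ^ (v n).val with hwdef
  have hwabs : ∀ n, ‖w n‖ = 1 := by
    intro n; rw [hwdef]; simp only [norm_pow, hζ1, one_pow]
  have hwrel : ∀ n, w n = w (n + 1) ^ P n := by
    intro n
    rw [hwdef]
    simp only [← pow_mul]
    refine pow_congr_mod hζr ?_
    rw [← ZMod.natCast_eq_natCast_iff]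
    push_cast [ZMod.natCast_val, ZMod.cast_id]
    exact (hvrec n).symm
  refine ⟨w, ⟨hwabs, hwrel⟩, ?_, ?_⟩
  · -- periodicity
    refine ⟨r.totient, Nat.totient_pos.mpr hrpos, fun n => ?_⟩
    have hkr : k.Coprime r := Nat.Coprime.pow_right e
      ((hq.coprime_iff_not_dvd.mpr fun hdvd =>
        absurd (Nat.le_of_dvd hk hdvd) (not_le.mpr hqk)).symm)
    have hkm : k ^ r.totient ≡ 1 [MOD r] := Nat.ModEq.pow_totient hkr
    rw [hwdef]
    simp only [← pow_mul]
    refine pow_congr_mod hζr ?_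
    calc (v n).val * k ^ r.totient ≡ (v n).val * 1 [MOD r] := Nat.ModEq.mul_left _ hkm
      _ = (v n).val := mul_one _
  · -- closeness
    intro n hn
    have hnN' : n ≤ N' := le_trans hn (le_max_left N M)
    -- value at N'
    have hvN' : v N' = (a : ZMod r) := by
      rw [hvdef]; simp
    have hzN' : z N' = Complex.exp ((θ : ℂ) * Complex.I) := by
      conv_lhs => rw [← Complex.norm_mul_exp_arg_mul_I (z N')]
      rw [hzabs N', ← hθdef]
      push_cast
      ring_nf
    set φ : ℝ := 2 * Real.pi * a / r with hφdef
    have hwN' : w N' = Complex.exp ((φ : ℂ) * Complex.I) := by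
      have hba : (((v N').val : ℤ) : ZMod r) = ((a : ZMod r)) := by
        push_cast [ZMod.natCast_val, ZMod.cast_id]
        rw [hvN']
      obtain ⟨c, hc⟩ := ((ZMod.intCast_eq_intCast_iff _ _ _).mp hba).dvd
      -- hc : a - ((v N').val : ℤ) = ↑r * c
      have hzp : ζ ^ (((v N').val : ℤ)) = ζ ^ a := by
        have hval : ((v N').val : ℤ) = a - r * c := by linarith
        rw [hval, zpow_sub₀ hζ0, zpow_mul, zpow_natCast, hζr, one_zpow, div_one]
      have h3 : ζ ^ (v N').val = ζ ^ a := by rw [← zpow_natCast, hzp]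
      simp only [hwdef]
      rw [h3, hζdef, ← Complex.exp_int_mul]
      congr 1
      rw [hφdef]
      have hrC : (r:ℂ) ≠ 0 := by exact_mod_cast hrR.ne'
      push_cast
      field_simp
    -- |θ - φ| ≤ 2π/r
    set δ : ℝ := 2 * Real.pi / r with hδdef
    have hδpos : 0 < δ := by positivity
    have hδr : δ * r = 2 * Real.pi := by rw [hδdef]; field_simp
    have hφr : φ * r = 2 * Real.pi * a := by rw [hφdef]; field_simp
    have h1 : (a:ℝ) ≤ θ * r / (2 * Real.pi) := Int.floor_le _
    have h2 : θ * r / (2 * Real.pi) < a + 1 := Int.lt_floor_add_one _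
    have h1' : (a:ℝ) * (2 * Real.pi) ≤ θ * r := (le_div_iff₀ (by positivity)).mp h1
    have h2' : θ * r < ((a:ℝ) + 1) * (2 * Real.pi) := (div_lt_iff₀ (by positivity)).mp h2
    have hA : φ ≤ θ := by
      have : φ * r ≤ θ * r := by rw [hφr]; nlinarith
      exact le_of_mul_le_mul_right this hrR
    have hB : θ < φ + δ := by
      have : θ * r < (φ + δ) * r := by
        rw [add_mul, hφr, hδr]; nlinarith
      exact lt_of_mul_lt_mul_right this hrR.le
    have hθφ : |θ - φ| ≤ δ := by
      rw [abs_le]; constructor <;> nlinarith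
    have hδ1 : δ ≤ 1 := by
      rw [hδdef, div_le_one hrR]
      nlinarith [Real.pi_lt_d2]
    -- distance at N'
    have hdN' : ‖w N' - z N'‖ ≤ 2 * δ := by
      rw [hwN', hzN']
      calc ‖Complex.exp ((φ:ℂ) * Complex.I) - Complex.exp ((θ:ℂ) * Complex.I)‖
          ≤ 2 * |φ - θ| := exp_close φ θ (by rw [abs_sub_comm]; exact le_trans hθφ hδ1)
        _ ≤ 2 * δ := by rw [abs_sub_comm]; linarith
    -- transport to coordinate n
    set t : ℕ := ∏ j ∈ Finset.Ico n N', P j with htdef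
    have htC : t ≤ C := Finset.prod_le_prod_of_subset_of_one_le'
      (Finset.Ico_subset_Ico (Nat.zero_le n) le_rfl) (fun i _ _ => (hP i).one_lt.le)
    have hwn : w n = w N' ^ t := solenoid_telescope hwrel n N' hnN'
    have hzn : z n = z N' ^ t := solenoid_telescope hzrel n N' hnN'
    rw [hwn, hzn]
    calc ‖w N' ^ t - z N' ^ t‖
        ≤ t * ‖w N' - z N'‖ := pow_lip _ _ (hwabs N') (hzabs N') t
      _ ≤ C * (2 * δ) := by
          apply mul_le_mul (by exact_mod_cast htC) hdN' (by positivity) hCpos.le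
      _ < ε := by
          rw [hδdef]
          rw [div_lt_iff₀ hε] at hrε
          have : (C:ℝ) * (2 * (2 * Real.pi / r)) = 4 * Real.pi * C / r := by ring
          rw [this, div_lt_iff₀ hrR]
          nlinarith

/-- If infinitely many primes occur only finitely often in `P`, then for every
`k ≥ 1` the periodic points of the coordinatewise `k`-th power map are dense in
the solenoid. -/
theorem stmt_14 (P : ℕ → ℕ) (hP : ∀ n, (P n).Prime)
    (hS : {q : ℕ | q.Prime ∧ {n | P n = q}.Finite}.Infinite)
    (k : ℕ) (hk : 0 < k) :
    Dense {z : Solenoid P | ∃ m : ℕ, 1 ≤ m ∧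
      (hpow k)^[m] (z : ℕ → ℂ) = (z : ℕ → ℂ)} := by

  obtain ⟨q, ⟨hq, hqfin⟩, hqk⟩ := hS.exists_gt k
  obtain ⟨M, hM⟩ := hqfin.bddAbove
  have hM' : ∀ n, M + 1 ≤ n → P n ≠ q := by
    intro n hn hPn
    have := hM (show n ∈ {n | P n = q} from hPn)
    omega
  intro z
  have happ : ∀ j : ℕ, ∃ w ∈ Solenoid P, (∃ m, 1 ≤ m ∧ ∀ n, w n ^ k ^ m = w n) ∧
      ∀ n ≤ j, ‖w n - (z : ℕ → ℂ) n‖ < 1/(j+1) :=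
    fun j => approx P hP k hk q hq hqk (M+1) hM' z.1 z.2 j (1/(j+1)) (by positivity)
  choose w hwS hwper hwcl using happ
  have hWt : Filter.Tendsto (fun j => (⟨w j, hwS j⟩ : Solenoid P)) Filter.atTop (nhds z) := by
    rw [tendsto_subtype_rng, tendsto_pi_nhds]
    intro n
    rw [tendsto_iff_dist_tendsto_zero]
    apply squeeze_zero' (Filter.Eventually.of_forall fun j => dist_nonneg)
    · filter_upwards [Filter.eventually_ge_atTop n] with j hj
      exact le_of_lt (by rw [Complex.dist_eq]; exact hwcl j n hj)
    · exact tendsto_one_div_add_atTop_nhds_zero_nat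
  refine mem_closure_of_tendsto hWt (Filter.Eventually.of_forall fun j => ?_)
  obtain ⟨m, hm1, hm2⟩ := hwper j
  exact ⟨m, hm1, funext fun n => by rw [hpow_iter]; exact hm2 n⟩
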